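/- arXiv:1805.05448 — 9 statements merged into one kernel-verified Lean document; each statement's English description precedes it below -/
import Mathlib

section
/- Let P be a finite set of points in the plane, each assigned one of 2k colors, such that every color is used by at least one point. Among all perfect matchings on color-spanning subsets (subsets of 2k points, one of each color), let M be one minimizing the total Euclidean edge length. Then for every edge (p,q) of M, the distance |pq| equals the minimum Euclidean distance between any point of color(p) and any point of color(q) in P. -/
open scoped Classical

noncomputable section

abbrev Pt := EuclideanSpace ℝ (Fin 2)

/-- A color-spanning matching of a `2*k`-colored point set `P`: `k` edges whose
`2*k` endpoints lie in `P` and have pairwise distinct colors (hence the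
endpoints are pairwise distinct and all `2*k` colors are used). -/
structure CSM (k : ℕ) (P : Finset Pt) (color : Pt → Fin (2*k)) where
  e : Fin k → Pt × Pt
  mem1 : ∀ i, (e i).1 ∈ P
  mem2 : ∀ i, (e i).2 ∈ P
  colorInj : Function.Injective
    (fun x : Fin k × Bool => color (if x.2 then (e x.1).1 else (e x.1).2))

def CSM.weight {k : ℕ} {P : Finset Pt} {color : Pt → Fin (2*k)}
    (M : CSM k P color) : ℝ :=
  ∑ i, dist (M.e i).1 (M.e i).2

def CSM.minEdge {k : ℕ} (hk : 0 < k) {P : Finset Pt} {color : Pt → Fin (2*k)}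
    (M : CSM k P color) : ℝ :=
  Finset.univ.inf' ⟨⟨0, hk⟩, Finset.mem_univ _⟩ fun i => dist (M.e i).1 (M.e i).2

def CSM.maxEdge {k : ℕ} (hk : 0 < k) {P : Finset Pt} {color : Pt → Fin (2*k)}
    (M : CSM k P color) : ℝ :=
  Finset.univ.sup' ⟨⟨0, hk⟩, Finset.mem_univ _⟩ fun i => dist (M.e i).1 (M.e i).2

/-- In a MinSum-optimal color-spanning matching, every matched edge realizes the
bichromatic closest-pair distance between its two endpoint colors. -/
theorem minsum_edge_is_bichromatic_closest_pair
    (k : ℕ) (P : Finset Pt) (color : Pt → Fin (2*k))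
    (hsurj : ∀ c : Fin (2*k), ∃ p ∈ P, color p = c)
    (M : CSM k P color)
    (hopt : ∀ M' : CSM k P color, M.weight ≤ M'.weight) :
    ∀ i : Fin k, ∀ p ∈ P, ∀ q ∈ P,
      color p = color (M.e i).1 → color q = color (M.e i).2 →
      dist (M.e i).1 (M.e i).2 ≤ dist p q := by
  intro i p hp q hq hcp hcq
  let e' : Fin k → Pt × Pt := fun j => if j = i then (p, q) else M.e j
  have hcol : (fun x : Fin k × Bool => color (if x.2 then (e' x.1).1 else (e' x.1).2))
      = (fun x : Fin k × Bool => color (if x.2 then (M.e x.1).1 else (M.e x.1).2)) := by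
    funext x
    by_cases h : x.1 = i <;> cases hb : x.2 <;> simp [e', h, hcp, hcq]
  let M' : CSM k P color :=
    { e := e'
      mem1 := by
        intro j
        by_cases h : j = i <;> simp [e', h, hp, M.mem1]
      mem2 := by
        intro j
        by_cases h : j = i <;> simp [e', h, hq, M.mem2]
      colorInj := by rw [hcol]; exact M.colorInj }
  have h := hopt M'
  unfold CSM.weight at h
  have h1 : ∑ j, dist (M.e j).1 (M.e j).2
      = dist (M.e i).1 (M.e i).2 + ∑ j ∈ Finset.univ.erase i, dist (M.e j).1 (M.e j).2 :=
    (Finset.add_sum_erase _ _ (Finset.mem_univ i)).symm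
  have h2 : ∑ j, dist (M'.e j).1 (M'.e j).2
      = dist p q + ∑ j ∈ Finset.univ.erase i, dist (M.e j).1 (M.e j).2 := by
    rw [← Finset.add_sum_erase _ _ (Finset.mem_univ i)]
    congr 1
    · simp [M', e']
    · apply Finset.sum_congr rfl
      intro j hj
      have : j ≠ i := (Finset.mem_erase.mp hj).1
      simp [M', e', this]
  rw [h1, h2] at h
  linarith

end
end

section
/- Let P be a finite set of points in the plane, each assigned one of 2k colors, with every color used. Among all color-spanning matchings, let M be one maximizing the minimum edge length. Then there exists an optimal matching M such that its minimum-length edge (p,q) satisfies: |pq| equals the maximum Euclidean distance between any point of color(p) and any point of color(q) in P. -/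
open scoped Classical

noncomputable section

/-- There is a MaxMin-optimal color-spanning matching whose minimum-length edge
realizes the bichromatic farthest-pair distance between its endpoint colors. -/
theorem maxmin_min_edge_is_bichromatic_farthest_pair
    (k : ℕ) (hk : 0 < k) (P : Finset Pt) (color : Pt → Fin (2*k))
    (hsurj : ∀ c : Fin (2*k), ∃ p ∈ P, color p = c) :
    ∃ M : CSM k P color,
      (∀ M' : CSM k P color, M'.minEdge hk ≤ M.minEdge hk) ∧
      ∃ i : Fin k,
        M.minEdge hk = dist (M.e i).1 (M.e i).2 ∧
        ∀ p ∈ P, ∀ q ∈ P,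
          color p = color (M.e i).1 → color q = color (M.e i).2 →
          dist p q ≤ dist (M.e i).1 (M.e i).2 := by
  classical
  -- value and weight of an edge-function
  set val : (Fin k → Pt × Pt) → ℝ := fun e =>
    Finset.univ.inf' ⟨⟨0, hk⟩, Finset.mem_univ _⟩ fun i => dist (e i).1 (e i).2 with hval
  set wt : (Fin k → Pt × Pt) → ℝ := fun e => ∑ i, dist (e i).1 (e i).2 with hwt
  set cf : (Fin k → Pt × Pt) → (Fin k × Bool → Fin (2*k)) := fun e x =>
    color (if x.2 then (e x.1).1 else (e x.1).2) with hcf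
  -- the finite set of admissible edge-functions
  set A : Finset (Fin k → Pt × Pt) :=
    (Fintype.piFinset fun _ : Fin k => P ×ˢ P).filter
      (fun e => Function.Injective (cf e)) with hA
  have memA : ∀ e, e ∈ A ↔ ((∀ i, (e i).1 ∈ P ∧ (e i).2 ∈ P) ∧
      Function.Injective (cf e)) := by
    intro e
    simp [hA, Fintype.mem_piFinset, Finset.mem_product]
  -- A is nonempty
  have hAne : A.Nonempty := by
    choose rep hrepP hrepc using hsurj
    refine ⟨fun i => (rep ⟨2*i.1, by omega⟩, rep ⟨2*i.1+1, by omega⟩), ?_⟩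
    rw [memA]
    refine ⟨fun i => ⟨hrepP _, hrepP _⟩, ?_⟩
    rintro ⟨i, b⟩ ⟨j, c⟩ h
    cases b <;> cases c <;> simp [hcf, hrepc] at h <;>
      simp [Prod.ext_iff, Fin.ext_iff] <;> omega
  -- maximize val over A
  obtain ⟨e₀, he₀A, he₀max⟩ := A.exists_max_image val hAne
  -- among those with maximal val, maximize wt
  set B : Finset (Fin k → Pt × Pt) := A.filter (fun e => val e₀ ≤ val e) with hB
  have hBne : B.Nonempty := ⟨e₀, by simp [hB, he₀A]⟩
  obtain ⟨e₁, he₁B, he₁max⟩ := B.exists_max_image wt hBne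
  have he₁A : e₁ ∈ A := (Finset.mem_filter.mp he₁B).1
  have he₁val : val e₀ ≤ val e₁ := (Finset.mem_filter.mp he₁B).2
  rw [memA] at he₁A
  -- construct the matching
  refine ⟨⟨e₁, fun i => (he₁A.1 i).1, fun i => (he₁A.1 i).2, he₁A.2⟩, ?_, ?_⟩
  · intro M'
    have hM'A : M'.e ∈ A := by
      rw [memA]; exact ⟨fun i => ⟨M'.mem1 i, M'.mem2 i⟩, M'.colorInj⟩
    calc M'.minEdge hk = val M'.e := rfl
      _ ≤ val e₀ := he₀max _ hM'A
      _ ≤ val e₁ := he₁val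
  · -- the minimum edge
    obtain ⟨i, -, hi⟩ := Finset.exists_mem_eq_inf' (α := ℝ)
      (⟨⟨0, hk⟩, Finset.mem_univ _⟩ : (Finset.univ (α := Fin k)).Nonempty)
      (fun i => dist (e₁ i).1 (e₁ i).2)
    refine ⟨i, hi, ?_⟩
    by_contra hcon
    push_neg at hcon
    obtain ⟨p, hp, q, hq, hcp, hcq, hlt⟩ := hcon
    -- swap edge i for the farther pair (p, q)
    set e₂ : Fin k → Pt × Pt := Function.update e₁ i (p, q) with he₂
    have he₂i : e₂ i = (p, q) := Function.update_self i (p, q) e₁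
    have he₂ne : ∀ j, j ≠ i → e₂ j = e₁ j := fun j hj => Function.update_of_ne hj _ _
    have hcfeq : cf e₂ = cf e₁ := by
      funext x
      rcases x with ⟨j, b⟩
      by_cases hji : j = i
      · subst hji
        cases b <;> simp [hcf, he₂i, ← hcp, ← hcq]
      · simp [hcf, he₂ne j hji]
    have he₂A : e₂ ∈ A := by
      rw [memA]
      refine ⟨fun j => ?_, by rw [hcfeq]; exact he₁A.2⟩
      by_cases hji : j = i
      · subst hji; rw [he₂i]; exact ⟨hp, hq⟩
      · rw [he₂ne j hji]; exact he₁A.1 j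
    have hval₁i : val e₁ = dist (e₁ i).1 (e₁ i).2 := hi
    have hvalle : val e₀ ≤ val e₂ := by
      refine le_trans he₁val ?_
      apply Finset.le_inf'
      intro j _
      by_cases hji : j = i
      · subst hji
        rw [he₂i]
        exact le_of_lt (lt_of_le_of_lt (le_of_eq hval₁i) hlt)
      · rw [he₂ne j hji]
        exact Finset.inf'_le _ (Finset.mem_univ j)
    have he₂B : e₂ ∈ B := Finset.mem_filter.mpr ⟨he₂A, hvalle⟩
    have hwtlt : wt e₁ < wt e₂ := by
      apply Finset.sum_lt_sum
      · intro j _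
        by_cases hji : j = i
        · subst hji; rw [he₂i]; exact le_of_lt (hval₁i ▸ hlt)
        · rw [he₂ne j hji]
      · exact ⟨i, Finset.mem_univ i, by rw [he₂i]; exact hval₁i ▸ hlt⟩
    exact absurd (he₁max _ he₂B) (not_le.mpr hwtlt)

end
end

section
/- Let P be a finite set of points in the plane, each assigned one of 2k colors, with every color used. Among all color-spanning matchings, let M be one minimizing the maximum edge length. Then there exists an optimal matching M such that its maximum-length edge (p,q) satisfies: |pq| equals the minimum Euclidean distance between any point of color(p) and any point of color(q) in P. -/
open scoped Classical

noncomputable section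

/-- There is a MinMax-optimal color-spanning matching whose maximum-length edge
realizes the bichromatic closest-pair distance between its endpoint colors. -/
theorem minmax_max_edge_is_bichromatic_closest_pair
    (k : ℕ) (hk : 0 < k) (P : Finset Pt) (color : Pt → Fin (2*k))
    (hsurj : ∀ c : Fin (2*k), ∃ p ∈ P, color p = c) :
    ∃ M : CSM k P color,
      (∀ M' : CSM k P color, M.maxEdge hk ≤ M'.maxEdge hk) ∧
      ∃ i : Fin k,
        M.maxEdge hk = dist (M.e i).1 (M.e i).2 ∧
        ∀ p ∈ P, ∀ q ∈ P,
          color p = color (M.e i).1 → color q = color (M.e i).2 →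
          dist (M.e i).1 (M.e i).2 ≤ dist p q := by
  classical
  choose c hc1 hc2 using hsurj
  -- a CSM exists
  have hM0 : Nonempty (CSM k P color) := by
    refine ⟨⟨fun i => (c ⟨2*i, by omega⟩, c ⟨2*i+1, by omega⟩), fun i => hc1 _,
      fun i => hc1 _, ?_⟩⟩
    rintro ⟨i, b⟩ ⟨j, b'⟩ h
    cases b <;> cases b' <;>
      simp_all [hc2, Fin.ext_iff, Prod.ext_iff] <;> omega
  -- finiteness of ranges
  have hErange : (Set.range (fun M : CSM k P color => M.e)).Finite := by
    have h1 : (Set.univ.pi (fun _ : Fin k => ((P ×ˢ P : Finset (Pt × Pt)) : Set (Pt × Pt)))).Finite :=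
      Set.Finite.pi (fun _ => (P ×ˢ P).finite_toSet)
    refine h1.subset ?_
    rintro _ ⟨M, rfl⟩ i _
    exact Finset.mem_coe.mpr (Finset.mk_mem_product (M.mem1 i) (M.mem2 i))
  have hAfin : (Set.range (fun M : CSM k P color => M.maxEdge hk)).Finite := by
    have hsub : Set.range (fun M : CSM k P color => M.maxEdge hk)
        ⊆ (fun f : Fin k → Pt × Pt => Finset.univ.sup' ⟨⟨0, hk⟩, Finset.mem_univ _⟩
            (fun i => dist (f i).1 (f i).2)) '' Set.range (fun M : CSM k P color => M.e) := by
      rintro _ ⟨M, rfl⟩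
      exact ⟨M.e, ⟨M, rfl⟩, rfl⟩
    exact (hErange.image _).subset hsub
  have hWfin : (Set.range (fun M : CSM k P color => M.weight)).Finite := by
    have hsub : Set.range (fun M : CSM k P color => M.weight)
        ⊆ (fun f : Fin k → Pt × Pt => ∑ i, dist (f i).1 (f i).2) ''
            Set.range (fun M : CSM k P color => M.e) := by
      rintro _ ⟨M, rfl⟩
      exact ⟨M.e, ⟨M, rfl⟩, rfl⟩
    exact (hErange.image _).subset hsub
  obtain ⟨M0⟩ := hM0
  -- minimize maxEdge
  set s : Finset ℝ := hAfin.toFinset with hsdef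
  have hs : s.Nonempty := ⟨M0.maxEdge hk, by simp [hsdef]⟩
  set m0 : ℝ := s.min' hs with hm0def
  obtain ⟨M1, hM1⟩ : ∃ M : CSM k P color, M.maxEdge hk = m0 :=
    (Set.Finite.mem_toFinset hAfin).mp (s.min'_mem hs)
  have hm0le : ∀ M' : CSM k P color, m0 ≤ M'.maxEdge hk := by
    intro M'
    exact s.min'_le _ (by rw [hsdef, Set.Finite.mem_toFinset]; exact ⟨M', rfl⟩)
  -- minimize weight among optimal
  have hBfin : (Set.range (fun M : {M : CSM k P color // M.maxEdge hk = m0} => M.1.weight)).Finite := by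
    refine hWfin.subset ?_
    rintro _ ⟨M, rfl⟩
    exact ⟨M.1, rfl⟩
  set t : Finset ℝ := hBfin.toFinset with htdef
  have ht : t.Nonempty := ⟨M1.weight, by
    rw [htdef, Set.Finite.mem_toFinset]; exact ⟨⟨M1, hM1⟩, rfl⟩⟩
  set w0 : ℝ := t.min' ht with hw0def
  obtain ⟨M, hMmax, hMw⟩ : ∃ M : CSM k P color, M.maxEdge hk = m0 ∧ M.weight = w0 := by
    obtain ⟨M, hM⟩ := (Set.Finite.mem_toFinset hBfin).mp (t.min'_mem ht)
    exact ⟨M.1, M.2, hM⟩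
  have hw0le : ∀ M' : CSM k P color, M'.maxEdge hk = m0 → w0 ≤ M'.weight := by
    intro M' hM'
    exact t.min'_le _ (by rw [htdef, Set.Finite.mem_toFinset]; exact ⟨⟨M', hM'⟩, rfl⟩)
  refine ⟨M, fun M' => hMmax ▸ hm0le M', ?_⟩
  obtain ⟨i, _, hi⟩ := Finset.exists_mem_eq_sup' (s := (Finset.univ : Finset (Fin k)))
    ⟨⟨0, hk⟩, Finset.mem_univ _⟩ (fun i => dist (M.e i).1 (M.e i).2)
  refine ⟨i, hi, ?_⟩
  intro p hp q hq hcp hcq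
  by_contra hlt
  push_neg at hlt
  -- exchange argument
  set M' : CSM k P color :=
    ⟨fun j => if j = i then (p, q) else M.e j,
     fun j => by by_cases h : j = i <;> simp [h, hp, M.mem1],
     fun j => by by_cases h : j = i <;> simp [h, hq, M.mem2],
     by
      have heq : (fun x : Fin k × Bool =>
          color (if x.2 then (if x.1 = i then (p, q) else M.e x.1).1
            else (if x.1 = i then (p, q) else M.e x.1).2))
          = fun x : Fin k × Bool => color (if x.2 then (M.e x.1).1 else (M.e x.1).2) := by
        funext x
        obtain ⟨j, b⟩ := x
        by_cases h : j = i
        · subst h; cases b <;> simp [hcp, hcq]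
        · simp [h]
      rw [heq]
      exact M.colorInj⟩ with hM'def
  have hM'e : ∀ j, M'.e j = if j = i then (p, q) else M.e j := fun j => rfl
  have hM'max : M'.maxEdge hk = m0 := by
    refine le_antisymm ?_ (hm0le M')
    rw [CSM.maxEdge]
    refine Finset.sup'_le _ _ ?_
    intro j _
    rw [hM'e]
    by_cases h : j = i
    · rw [if_pos h]
      calc dist p q ≤ dist (M.e i).1 (M.e i).2 := le_of_lt hlt
        _ = M.maxEdge hk := hi.symm
        _ = m0 := hMmax
    · rw [if_neg h]
      calc dist (M.e j).1 (M.e j).2 ≤ M.maxEdge hk :=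
            Finset.le_sup' (f := fun i => dist (M.e i).1 (M.e i).2) (Finset.mem_univ j)
        _ = m0 := hMmax
  have hwlt : M'.weight < M.weight := by
    rw [CSM.weight, CSM.weight]
    refine Finset.sum_lt_sum (fun j _ => ?_) ⟨i, Finset.mem_univ i, ?_⟩
    · rw [hM'e]
      by_cases h : j = i
      · rw [if_pos h, h]
        exact le_of_lt hlt
      · rw [if_neg h]
    · rw [hM'e, if_pos rfl]
      exact hlt
  have := hw0le M' hM'max
  rw [hMw] at hwlt
  linarith


end
end

section
/- Let G = (V, E) be an undirected graph with a vertex coloring color : V → Fin (2k). Define the color graph G₁ on vertex set Fin (2k) with an edge {i, j} (i ≠ j) whenever there exist p, q ∈ V with {p, q} ∈ E, color(p) = i, and color(q) = j. Then G has a set of k pairwise vertex-disjoint edges whose 2k endpoints have pairwise distinct colors (covering all 2k colors) if and only if G₁ has a perfect matching. -/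
/-- The color graph `G₁` on the `2*k` colors: colors `i ≠ j` are adjacent iff
some edge of `G` joins a vertex of color `i` to a vertex of color `j`. -/
def colorGraph {V : Type*} (k : ℕ) (G : SimpleGraph V) (color : V → Fin (2*k)) :
    SimpleGraph (Fin (2*k)) :=
  SimpleGraph.fromRel fun i j => ∃ p q, G.Adj p q ∧ color p = i ∧ color q = j

/-- `G` has `k` pairwise vertex-disjoint edges whose `2*k` endpoints have pairwise
distinct colors (covering all colors) iff the color graph `G₁` has a perfect
matching (encoded as `k` edges of `G₁` whose endpoints enumerate all `2*k`
colors without repetition). -/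
theorem multicoloredMatching_iff_colorGraph_perfectMatching
    {V : Type*} (k : ℕ) (G : SimpleGraph V) (color : V → Fin (2*k)) :
    (∃ e : Fin k → V × V,
        (∀ i, G.Adj (e i).1 (e i).2) ∧
        Function.Injective (fun x : Fin k × Bool =>
          color (if x.2 then (e x.1).1 else (e x.1).2))) ↔
    (∃ f : Fin k → Fin (2*k) × Fin (2*k),
        (∀ i, (colorGraph k G color).Adj (f i).1 (f i).2) ∧
        Function.Injective (fun x : Fin k × Bool =>
          if x.2 then (f x.1).1 else (f x.1).2)) := by
  constructor
  · rintro ⟨e, hadj, hinj⟩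
    refine ⟨fun i => (color (e i).1, color (e i).2), fun i => ?_, ?_⟩
    · rw [colorGraph, SimpleGraph.fromRel_adj]
      refine ⟨?_, Or.inl ⟨(e i).1, (e i).2, hadj i, rfl, rfl⟩⟩
      have := hinj.ne (a₁ := (i, true)) (a₂ := (i, false)) (by simp)
      simpa using this
    · have : (fun x : Fin k × Bool =>
          if x.2 then color (e x.1).1 else color (e x.1).2) =
          (fun x : Fin k × Bool =>
          color (if x.2 then (e x.1).1 else (e x.1).2)) := by
        funext x; rcases x with ⟨i, b⟩; cases b <;> simp
      simpa [this] using hinj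
  · rintro ⟨f, hadj, hinj⟩
    have key : ∀ i, ∃ p q, G.Adj p q ∧ color p = (f i).1 ∧ color q = (f i).2 := by
      intro i
      have h := hadj i
      rw [colorGraph, SimpleGraph.fromRel_adj] at h
      rcases h.2 with ⟨p, q, hpq, hp, hq⟩ | ⟨p, q, hpq, hp, hq⟩
      · exact ⟨p, q, hpq, hp, hq⟩
      · exact ⟨q, p, hpq.symm, hq, hp⟩
    choose p q hpq hp hq using key
    refine ⟨fun i => (p i, q i), fun i => hpq i, ?_⟩
    have : (fun x : Fin k × Bool =>
        color (if x.2 then p x.1 else q x.1)) =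
        (fun x : Fin k × Bool => if x.2 then (f x.1).1 else (f x.1).2) := by
      funext x; rcases x with ⟨i, b⟩; cases b <;> simp [hp, hq]
    simpa [this] using hinj
end

section
/- Let G = (V, E) be an undirected graph with edge weights w : E → ℝ, vertices colored by color : V → Fin (2k). Define the weighted color graph G₁ on Fin (2k) where edge {i,j} exists iff some edge of G joins a vertex of color i to a vertex of color j, with weight equal to the minimum weight of such an edge of G. Then the minimum total weight over all k-multicolored matchings in G equals the minimum total weight over all perfect matchings of G₁ (whenever either exists). -/
noncomputable section

/-- A `k`-multicolored matching in `G`: `k` edges whose `2*k` endpoints have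
pairwise distinct colors (hence are pairwise distinct, covering all colors). -/
def IsMCM {V : Type*} {k : ℕ} (G : SimpleGraph V) (color : V → Fin (2*k))
    (e : Fin k → V × V) : Prop :=
  (∀ i, G.Adj (e i).1 (e i).2) ∧
  Function.Injective (fun x : Fin k × Bool =>
    color (if x.2 then (e x.1).1 else (e x.1).2))

/-- The weight of an edge `{i,j}` of the color graph `G₁`: the minimum weight of
an edge of `G` joining a vertex of color `i` to a vertex of color `j`. -/
def colorWeight {V : Type*} {k : ℕ} (G : SimpleGraph V) (color : V → Fin (2*k))
    (w : V → V → ℝ) (i j : Fin (2*k)) : ℝ :=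
  sInf {r : ℝ | ∃ p q, G.Adj p q ∧ color p = i ∧ color q = j ∧ w p q = r}

/-- A perfect matching of the color graph `G₁`: `k` edges of `G₁` whose
endpoints enumerate all `2*k` colors without repetition. -/
def IsColorPM {V : Type*} {k : ℕ} (G : SimpleGraph V) (color : V → Fin (2*k))
    (f : Fin k → Fin (2*k) × Fin (2*k)) : Prop :=
  (∀ i, ∃ p q, G.Adj p q ∧ color p = (f i).1 ∧ color q = (f i).2) ∧
  Function.Injective (fun x : Fin k × Bool =>
    if x.2 then (f x.1).1 else (f x.1).2)

/-- The minimum total weight over all `k`-multicolored matchings of `G` equals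
the minimum total weight over all perfect matchings of the weighted color graph
`G₁`, provided a multicolored matching exists. -/
theorem minWeight_multicoloredMatching_eq_minWeight_colorPM
    {V : Type*} [Fintype V] (k : ℕ) (G : SimpleGraph V) (color : V → Fin (2*k))
    (w : V → V → ℝ) (hw : ∀ p q, w p q = w q p)
    (hex : ∃ e : Fin k → V × V, IsMCM G color e) :
    sInf {W : ℝ | ∃ e : Fin k → V × V, IsMCM G color e ∧
        W = ∑ i, w (e i).1 (e i).2} =
    sInf {W : ℝ | ∃ f : Fin k → Fin (2*k) × Fin (2*k), IsColorPM G color f ∧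
        W = ∑ i, colorWeight G color w (f i).1 (f i).2} := by
  classical
  set A := {W : ℝ | ∃ e : Fin k → V × V, IsMCM G color e ∧
      W = ∑ i, w (e i).1 (e i).2} with hA
  set B := {W : ℝ | ∃ f : Fin k → Fin (2*k) × Fin (2*k), IsColorPM G color f ∧
      W = ∑ i, colorWeight G color w (f i).1 (f i).2} with hB
  -- finiteness of A and B
  have hAfin : A.Finite := by
    have hsub : A ⊆ (fun e : Fin k → V × V => ∑ i, w (e i).1 (e i).2) '' Set.univ := by
      rintro W ⟨e, _, rfl⟩; exact ⟨e, trivial, rfl⟩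
    exact (Set.finite_univ.image _).subset hsub
  have hBfin : B.Finite := by
    have hsub : B ⊆ (fun f : Fin k → Fin (2*k) × Fin (2*k) =>
        ∑ i, colorWeight G color w (f i).1 (f i).2) '' Set.univ := by
      rintro W ⟨f, _, rfl⟩; exact ⟨f, trivial, rfl⟩
    exact (Set.finite_univ.image _).subset hsub
  -- finiteness of the edge-weight sets
  have hSfin : ∀ i j : Fin (2*k),
      Set.Finite {r : ℝ | ∃ p q, G.Adj p q ∧ color p = i ∧ color q = j ∧ w p q = r} := by
    intro i j
    apply (Set.finite_range (fun pq : V × V => w pq.1 pq.2)).subset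
    rintro r ⟨p, q, _, _, _, rfl⟩
    exact ⟨(p, q), rfl⟩
  -- B ⊆ A : every color PM weight is realized by an MCM
  have hBA : B ⊆ A := by
    rintro W ⟨f, ⟨hadj, hinj⟩, rfl⟩
    have h : ∀ i : Fin k, ∃ pq : V × V, G.Adj pq.1 pq.2 ∧ color pq.1 = (f i).1 ∧
        color pq.2 = (f i).2 ∧ w pq.1 pq.2 = colorWeight G color w (f i).1 (f i).2 := by
      intro i
      obtain ⟨p, q, hpq, hcp, hcq⟩ := hadj i
      have hne : {r : ℝ | ∃ p q, G.Adj p q ∧ color p = (f i).1 ∧ color q = (f i).2 ∧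
          w p q = r}.Nonempty := ⟨w p q, p, q, hpq, hcp, hcq, rfl⟩
      obtain ⟨p', q', h1, h2, h3, h4⟩ := hne.csInf_mem (hSfin (f i).1 (f i).2)
      exact ⟨(p', q'), h1, h2, h3, h4⟩
    choose e he1 he2 he3 he4 using h
    refine ⟨e, ⟨he1, ?_⟩, (Finset.sum_congr rfl fun i _ => (he4 i).symm)⟩
    have heq : (fun x : Fin k × Bool =>
        color (if x.2 then (e x.1).1 else (e x.1).2)) =
        (fun x : Fin k × Bool => if x.2 then (f x.1).1 else (f x.1).2) := by
      funext x
      rcases x with ⟨i, b⟩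
      cases b <;> simp [he2, he3]
    rw [heq]
    exact hinj
  -- every MCM weight dominates some color PM weight
  have hAB : ∀ a ∈ A, ∃ b ∈ B, b ≤ a := by
    rintro a ⟨e, ⟨hadj, hinj⟩, rfl⟩
    refine ⟨∑ i, colorWeight G color w (color (e i).1) (color (e i).2),
      ⟨fun i => (color (e i).1, color (e i).2), ⟨?_, ?_⟩, rfl⟩, ?_⟩
    · intro i
      exact ⟨(e i).1, (e i).2, hadj i, rfl, rfl⟩
    · have heq : (fun x : Fin k × Bool =>
          if x.2 then color (e x.1).1 else color (e x.1).2) =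
          (fun x : Fin k × Bool => color (if x.2 then (e x.1).1 else (e x.1).2)) := by
        funext x
        rcases x with ⟨i, b⟩
        cases b <;> simp
      simpa [heq] using hinj
    · refine Finset.sum_le_sum fun i _ => ?_
      exact csInf_le (hSfin _ _).bddBelow ⟨(e i).1, (e i).2, hadj i, rfl, rfl, rfl⟩
  -- nonemptiness
  have hAne : A.Nonempty := by
    obtain ⟨e, he⟩ := hex
    exact ⟨∑ i, w (e i).1 (e i).2, e, he, rfl⟩
  have hBne : B.Nonempty := by
    obtain ⟨a, ha⟩ := hAne
    obtain ⟨b, hb, _⟩ := hAB a ha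
    exact ⟨b, hb⟩
  refine le_antisymm (csInf_le_csInf hAfin.bddBelow hBne hBA) (le_csInf hAne ?_)
  rintro a ha
  obtain ⟨b, hb, hba⟩ := hAB a ha
  exact (csInf_le hBfin.bddBelow hb).trans hba

end
end

section
/- Let G = (V, E) be a finite simple graph whose vertices are colored with colors 1,…,k, with every color used. Construct G' on vertex set V ∪ U where U = {u₁,…,u_k}, uᵢ has color k+i, the edges of G' are E together with E' = { {uᵢ, v} : v ∈ V, color(v) = i }. Then G has a colorful independent set of size k (one vertex per color among 1..k) if and only if G' has a colorful independent matching of size k, i.e., a set of k edges whose 2k endpoints have pairwise distinct colors (covering all 2k colors) and such that for any two distinct edges {x₁,x₂}, {y₁,y₂} in the set, no pair {xᵢ, yⱼ} is an edge of G'. -/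
/-- The graph `G' = (V ∪ U, E ∪ E')`: vertices are `V ⊕ Fin k` where `Sum.inr i`
is the new vertex `uᵢ`; edges are the edges of `G` together with
`E' = { {uᵢ, v} : v ∈ V, color v = i }`. -/
def hardGraph {V : Type*} (G : SimpleGraph V) {k : ℕ} (color : V → Fin k) :
    SimpleGraph (V ⊕ Fin k) :=
  SimpleGraph.fromRel fun x y =>
    (∃ u v, x = Sum.inl u ∧ y = Sum.inl v ∧ G.Adj u v) ∨
    (∃ i v, x = Sum.inr i ∧ y = Sum.inl v ∧ color v = i)

/-- The coloring of `G'` with `2*k` colors (modeled as `Fin k ⊕ Fin k`):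
a vertex `v ∈ V` keeps its color `color v` (as `Sum.inl (color v)`), and the
new vertex `uᵢ` gets the new color `k + i` (as `Sum.inr i`). -/
def hardColor {V : Type*} {k : ℕ} (color : V → Fin k) :
    V ⊕ Fin k → Fin k ⊕ Fin k :=
  Sum.map color id

/-- A colorful independent matching of size `k` in `G'`: `k` edges of `G'` whose
`2*k` endpoints have pairwise distinct colors (hence cover all `2*k` colors),
such that no edge of `G'` joins endpoints of two distinct matching edges. -/
def IsCIM {V : Type*} (G : SimpleGraph V) {k : ℕ} (color : V → Fin k)
    (e : Fin k → (V ⊕ Fin k) × (V ⊕ Fin k)) : Prop :=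
  (∀ i, (hardGraph G color).Adj (e i).1 (e i).2) ∧
  Function.Injective (fun x : Fin k × Bool =>
    hardColor color (if x.2 then (e x.1).1 else (e x.1).2)) ∧
  (∀ i j : Fin k, i ≠ j → ∀ a b : Bool,
    ¬ (hardGraph G color).Adj (if a then (e i).1 else (e i).2)
        (if b then (e j).1 else (e j).2))

/-- `G` has a colorful independent set of size `k` (one vertex per color) iff
`G'` has a colorful independent matching of size `k`. -/
theorem colorfulIS_iff_colorfulIndependentMatching
    {V : Type*} (G : SimpleGraph V) (k : ℕ) (color : V → Fin k)
    (hsurj : Function.Surjective color) :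
    (∃ g : Fin k → V, (∀ i, color (g i) = i) ∧
        ∀ i j : Fin k, i ≠ j → ¬ G.Adj (g i) (g j)) ↔
    (∃ e : Fin k → (V ⊕ Fin k) × (V ⊕ Fin k), IsCIM G color e) := by
  constructor
  · rintro ⟨g, hg, hind⟩
    refine ⟨fun i => (Sum.inr i, Sum.inl (g i)), ?_, ?_, ?_⟩
    · intro i
      simp only [hardGraph, SimpleGraph.fromRel_adj]
      exact ⟨by simp, Or.inl (Or.inr ⟨i, g i, rfl, rfl, hg i⟩)⟩
    · rintro ⟨i, a⟩ ⟨j, b⟩ h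
      cases a <;> cases b <;> simp_all [hardColor, hg]
    · intro i j hij a b hadj
      simp only [hardGraph, SimpleGraph.fromRel_adj] at hadj
      obtain ⟨hne, hr⟩ := hadj
      cases a <;> cases b <;>
        simp only [if_true, if_false, Bool.false_eq_true] at hr <;>
        rcases hr with (⟨x, y, hx, hy, hxy⟩ | ⟨i', v, hx, hy, hc⟩) |
          (⟨x, y, hx, hy, hxy⟩ | ⟨i', v, hx, hy, hc⟩) <;>
        simp_all <;> subst_vars <;>
        first
          | exact hind i j hij hxy
          | exact hind j i (fun h => hij h.symm) hxy
          | exact hind i j hij (by assumption)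
          | exact hind j i (fun h => hij h.symm) (by assumption)
          | simp_all
  · rintro ⟨e, hadj, hinj, hindep⟩
    have hbij : Function.Bijective (fun x : Fin k × Bool =>
        hardColor color (if x.2 then (e x.1).1 else (e x.1).2)) := by
      rw [Fintype.bijective_iff_injective_and_card]
      refine ⟨hinj, ?_⟩
      simp only [Fintype.card_prod, Fintype.card_bool, Fintype.card_sum, Fintype.card_fin]
      omega
    have hsur : ∀ j : Fin k, ∃ (i : Fin k) (a : Bool),
        (if a then (e i).1 else (e i).2) = Sum.inr j := by
      intro j
      obtain ⟨⟨i, a⟩, hx⟩ := hbij.2 (Sum.inr j)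
      refine ⟨i, a, ?_⟩
      have hx' : hardColor color (if a = true then (e i).1 else (e i).2) = Sum.inr j := hx
      cases h : (if a = true then (e i).1 else (e i).2) <;> rw [h] at hx' <;>
        simp [hardColor] at hx'
      rw [hx']
    have key : ∀ (i : Fin k) (a : Bool) (j : Fin k),
        (if a then (e i).1 else (e i).2) = Sum.inr j →
        ∃ v, (if a then (e i).2 else (e i).1) = Sum.inl v ∧ color v = j := by
      intro i a j h
      have h2 := hadj i
      simp only [hardGraph, SimpleGraph.fromRel_adj] at h2
      obtain ⟨hne, hr⟩ := h2
      cases a <;> simp only [if_true, if_false, Bool.false_eq_true] at h ⊢ <;>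
        rcases hr with (⟨x, y, hx, hy, hxy⟩ | ⟨j', v, hx, hy, hc⟩) |
          (⟨x, y, hx, hy, hxy⟩ | ⟨j', v, hx, hy, hc⟩) <;>
        simp_all <;>
        exact ⟨v, hy, by simp_all⟩
    choose σ τ hστ using hsur
    choose w hw hcw using fun j => key (σ j) (τ j) j (hστ j)
    have hσinj : Function.Injective σ := by
      intro j j' hjj'
      by_contra hne
      have h1 := hστ j
      have h2 := hστ j'
      rw [hjj'] at h1
      obtain ⟨v, hv, -⟩ := key (σ j') (τ j) j h1
      have hτ : τ j ≠ τ j' := by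
        intro h
        rw [h, h2] at h1
        exact hne (Sum.inr.inj h1).symm
      cases hτj : τ j <;> cases hτj' : τ j' <;> simp_all
    refine ⟨fun j => w j, hcw, ?_⟩
    intro j j' hjj' hGadj
    have hσne : σ j ≠ σ j' := fun h => hjj' (hσinj h)
    refine hindep (σ j) (σ j') hσne (!τ j) (!τ j') ?_
    have e1 : (if !τ j then (e (σ j)).1 else (e (σ j)).2) = Sum.inl (w j) := by
      have := hw j; cases h : τ j <;> simp_all
    have e2 : (if !τ j' then (e (σ j')).1 else (e (σ j')).2) = Sum.inl (w j') := by
      have := hw j'; cases h : τ j' <;> simp_all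
    rw [e1, e2]
    simp only [hardGraph, SimpleGraph.fromRel_adj]
    exact ⟨by simp [G.ne_of_adj hGadj], Or.inl (Or.inl ⟨w j, w j', rfl, rfl, hGadj⟩)⟩
end

section
/- In the construction of the previous statement (G' = (V ∪ U, E ∪ E') with U = {u₁,…,u_k} and E' = { {uᵢ,v} : color(v) = i }), every colorful independent matching of size k in G' consists exclusively of edges from E'; that is, no edge of the matching has both endpoints in V. -/
/-- Every colorful independent matching of size `k` in `G'` consists exclusively
of edges of `E'`: no matching edge has both endpoints in `V`. -/
theorem colorfulIndependentMatching_no_VV_edge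
    {V : Type*} (G : SimpleGraph V) (k : ℕ) (color : V → Fin k)
    (hsurj : Function.Surjective color)
    (e : Fin k → (V ⊕ Fin k) × (V ⊕ Fin k)) (he : IsCIM G color e) :
    ∀ i : Fin k, ¬ ∃ u v : V, (e i).1 = Sum.inl u ∧ (e i).2 = Sum.inl v := by
  rintro i ⟨u, v, h1, h2⟩
  obtain ⟨hadj, hinj, _⟩ := he
  -- no edge of the matching has both endpoints in U
  have notboth : ∀ m : Fin k, ¬ ∃ a b : Fin k,
      (e m).1 = Sum.inr a ∧ (e m).2 = Sum.inr b := by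
    rintro m ⟨a, b, ha, hb⟩
    have := hadj m
    rw [hardGraph, SimpleGraph.fromRel_adj, ha, hb] at this
    rcases this.2 with (⟨x, y, hx, _⟩ | ⟨x, y, hx, hy, _⟩) |
        (⟨x, y, hx, _⟩ | ⟨x, y, hx, hy, _⟩) <;> simp_all
  -- the coloring map is bijective
  have hbij : Function.Bijective (fun x : Fin k × Bool =>
      hardColor color (if x.2 then (e x.1).1 else (e x.1).2)) :=
    (Fintype.bijective_iff_injective_and_card _).2 ⟨hinj, by simp; ring⟩
  -- every new color `inr j` is attained, so some edge has endpoint `uⱼ`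
  have key : ∀ j : Fin k, ∃ m : Fin k,
      (e m).1 = Sum.inr j ∨ (e m).2 = Sum.inr j := by
    intro j
    obtain ⟨⟨m, b⟩, hx⟩ := hbij.2 (Sum.inr j)
    refine ⟨m, ?_⟩
    cases b <;> simp only [if_true, if_false, Bool.false_eq_true] at hx
    · right
      cases h : (e m).2 <;> rw [h] at hx <;> simp_all [hardColor]
    · left
      cases h : (e m).1 <;> rw [h] at hx <;> simp_all [hardColor]
  choose g hg using key
  have ginj : Function.Injective g := by
    intro j j' hjj
    rcases hg j with hj | hj <;> rcases hg j' with hj' | hj' <;>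
      rw [hjj] at hj
    · rw [hj] at hj'; exact (Sum.inr_injective (hj'.symm)).symm
    · exact absurd ⟨j, j', hj, hj'⟩ (notboth (g j'))
    · exact absurd ⟨j', j, hj', hj⟩ (notboth (g j'))
    · rw [hj] at hj'; exact (Sum.inr_injective (hj'.symm)).symm
  obtain ⟨j, hj⟩ := (Finite.surjective_of_injective ginj) i
  rcases hg j with h | h <;> rw [hj] at h <;> simp_all
end

section
/- Let G' = (V ∪ U, E ∪ E') be as above, and suppose M is a colorful independent matching of size k in G'. Then the set of V-endpoints of the edges in M is an independent set in G of size k with pairwise distinct colors. -/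
/-- The `V`-endpoints of a colorful independent matching of size `k` in `G'`
form an independent set of `G` of size `k` with pairwise distinct colors. -/
theorem colorfulIndependentMatching_gives_colorfulIS
    {V : Type*} (G : SimpleGraph V) (k : ℕ) (color : V → Fin k)
    (hsurj : Function.Surjective color)
    (e : Fin k → (V ⊕ Fin k) × (V ⊕ Fin k)) (he : IsCIM G color e) :
    ∃ g : Fin k → V, Function.Injective g ∧
      (∀ i, (e i).1 = Sum.inl (g i) ∨ (e i).2 = Sum.inl (g i)) ∧
      (∀ i j : Fin k, i ≠ j →
        color (g i) ≠ color (g j) ∧ ¬ G.Adj (g i) (g j)) := by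
  obtain ⟨hadj, hinj, hind⟩ := he
  have key : ∀ i, ∃ v, ∃ a : Bool, (if a then (e i).1 else (e i).2) = Sum.inl v := by
    intro i
    have h := hadj i
    rw [hardGraph, SimpleGraph.fromRel_adj] at h
    obtain ⟨-, h | h⟩ := h
    · rcases h with ⟨u, v, h1, h2, -⟩ | ⟨j, v, h1, h2, -⟩
      · exact ⟨u, true, h1⟩
      · exact ⟨v, false, h2⟩
    · rcases h with ⟨u, v, h1, h2, -⟩ | ⟨j, v, h1, h2, -⟩
      · exact ⟨u, false, h1⟩
      · exact ⟨v, true, h2⟩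
  choose g a hg using key
  have hddiff : ∀ i j : Fin k, color (g i) = color (g j) → i = j := by
    intro i j hc
    have h : (fun x : Fin k × Bool =>
        hardColor color (if x.2 then (e x.1).1 else (e x.1).2)) (i, a i)
        = (fun x : Fin k × Bool =>
        hardColor color (if x.2 then (e x.1).1 else (e x.1).2)) (j, a j) := by
      simp only [hg, hardColor, Sum.map_inl, hc]
    exact (Prod.mk.injEq _ _ _ _ ▸ hinj h).1
  refine ⟨g, fun i j hgij => hddiff i j (by rw [hgij]), fun i => ?_, fun i j hij => ?_⟩
  · cases ha : a i with
    | true => left; have := hg i; rwa [ha, if_pos rfl] at this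
    | false => right; have := hg i; rwa [ha, if_neg (by simp)] at this
  refine ⟨fun hc => hij (hddiff i j hc), fun hA => ?_⟩
  apply hind i j hij (a i) (a j)
  rw [hg i, hg j, hardGraph, SimpleGraph.fromRel_adj]
  exact ⟨by simpa using G.ne_of_adj hA, Or.inl (Or.inl ⟨g i, g j, rfl, rfl, hA⟩)⟩
end

section
/- Let G' = (V ∪ U, E ∪ E') be as above, and let V' ⊆ V be an independent set of G of size k with pairwise distinct colors. Then M = { {u_{color(v)}, v} : v ∈ V' } is a colorful independent matching of size k in G': its 2k endpoints have all 2k distinct colors, and no edge of G' joins endpoints of two distinct edges of M. -/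
/-- From a colorful independent set `V' = {g 0, …, g (k-1)}` of `G` (pairwise
distinct colors, pairwise non-adjacent), the edge set
`M = { {u_{color v}, v} : v ∈ V' }` is a colorful independent matching of size
`k` in `G'`. -/
theorem colorfulIS_gives_colorfulIndependentMatching
    {V : Type*} (G : SimpleGraph V) (k : ℕ) (color : V → Fin k)
    (hsurj : Function.Surjective color)
    (g : Fin k → V)
    (hg : ∀ i j : Fin k, i ≠ j →
      color (g i) ≠ color (g j) ∧ ¬ G.Adj (g i) (g j)) :
    IsCIM G color (fun i => (Sum.inr (color (g i)), Sum.inl (g i))) := by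
  have hc : ∀ i j : Fin k, color (g i) = color (g j) → i = j := by
    intro i j h
    by_contra hne
    exact (hg i j hne).1 h
  refine ⟨?_, ?_, ?_⟩
  · intro i
    simp only [hardGraph, SimpleGraph.fromRel_adj]
    exact ⟨by simp, Or.inl (Or.inr ⟨color (g i), g i, rfl, rfl, rfl⟩)⟩
  · rintro ⟨i, a⟩ ⟨j, b⟩ h
    cases a <;> cases b <;>
      simp only [if_true, if_false, Bool.false_eq_true, hardColor, Sum.map_inl,
        Sum.map_inr, Sum.inl.injEq, Sum.inr.injEq, id] at h
    · exact Prod.ext (hc _ _ h) rfl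
    · exact absurd h (by simp)
    · exact absurd h (by simp)
    · exact Prod.ext (hc _ _ h) rfl
  · intro i j hij a b
    have hcij := (hg i j hij).1
    have hcij' : color (g j) ≠ color (g i) := fun h => hcij h.symm
    have hadj := (hg i j hij).2
    have hadj' : ¬ G.Adj (g j) (g i) := fun h => hadj h.symm
    cases a <;> cases b <;>
    · simp only [hardGraph, SimpleGraph.fromRel_adj, if_true, if_false, Bool.false_eq_true]
      rintro ⟨-, (⟨u, v, h1, h2, h3⟩ | ⟨i', v, h1, h2, h3⟩) |
        (⟨u, v, h1, h2, h3⟩ | ⟨i', v, h1, h2, h3⟩)⟩ <;>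
      first
      | exact Sum.inl_ne_inr h1
      | exact Sum.inr_ne_inl h1
      | exact Sum.inl_ne_inr h2
      | exact Sum.inr_ne_inl h2
      | (injection h1 with h1; injection h2 with h2; subst h1; subst h2;
         first | exact hadj h3 | exact hadj' h3 | exact hcij h3 | exact hcij' h3)
end
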